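/- Let ρ be a 4×4 complex matrix indexed by Fin 2 × Fin 2 whose partial trace over the second factor equals (1/2)·I₂, and let ρ^Γ denote its partial transpose on the first factor, defined entrywise by (ρ^Γ)_{(i,k),(j,l)} = ρ_{(j,k),(i,l)}. Then for every λ ∈ ℂ, det(ρ^Γ − (1/2 − λ)·I₄) = det(ρ − λ·I₄); equivalently, the characteristic polynomials satisfy f_{ρ^Γ}(1/2 − λ) = f_ρ(λ). -/

import Mathlib

open Matrix

/-- Partial trace over the second factor of a two-qubit matrix. -/
noncomputable def ptrace2 (ρ : Matrix (Fin 2 × Fin 2) (Fin 2 × Fin 2) ℂ) : Matrix (Fin 2) (Fin 2) ℂ :=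
  fun i j => ∑ k, ρ (i, k) (j, k)

/-- Partial transpose on the first factor of a two-qubit matrix. -/
noncomputable def ptranspose1 (ρ : Matrix (Fin 2 × Fin 2) (Fin 2 × Fin 2) ℂ) :
    Matrix (Fin 2 × Fin 2) (Fin 2 × Fin 2) ℂ :=
  fun p q => ρ (q.1, p.2) (p.1, q.2)

/-- Explicit equivalence `Fin 4 ≃ Fin 2 × Fin 2`. -/
def qubitEquiv : Fin 4 ≃ Fin 2 × Fin 2 where
  toFun := ![(0, 0), (0, 1), (1, 0), (1, 1)]
  invFun := fun p => ![![0, 1], ![2, 3]] p.1 p.2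
  left_inv := by decide
  right_inv := by decide

set_option maxHeartbeats 1600000 in
lemma my_det_fin_four (A : Matrix (Fin 4) (Fin 4) ℂ) :
    A.det =
      A 0 0 * A 1 1 * A 2 2 * A 3 3 - A 0 0 * A 1 1 * A 2 3 * A 3 2 -
        A 0 0 * A 1 2 * A 2 1 * A 3 3 + A 0 0 * A 1 2 * A 2 3 * A 3 1 +
        A 0 0 * A 1 3 * A 2 1 * A 3 2 - A 0 0 * A 1 3 * A 2 2 * A 3 1 -
        A 0 1 * A 1 0 * A 2 2 * A 3 3 + A 0 1 * A 1 0 * A 2 3 * A 3 2 +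
        A 0 1 * A 1 2 * A 2 0 * A 3 3 - A 0 1 * A 1 2 * A 2 3 * A 3 0 -
        A 0 1 * A 1 3 * A 2 0 * A 3 2 + A 0 1 * A 1 3 * A 2 2 * A 3 0 +
        A 0 2 * A 1 0 * A 2 1 * A 3 3 - A 0 2 * A 1 0 * A 2 3 * A 3 1 -
        A 0 2 * A 1 1 * A 2 0 * A 3 3 + A 0 2 * A 1 1 * A 2 3 * A 3 0 +
        A 0 2 * A 1 3 * A 2 0 * A 3 1 - A 0 2 * A 1 3 * A 2 1 * A 3 0 -
        A 0 3 * A 1 0 * A 2 1 * A 3 2 + A 0 3 * A 1 0 * A 2 2 * A 3 1 +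
        A 0 3 * A 1 1 * A 2 0 * A 3 2 - A 0 3 * A 1 1 * A 2 2 * A 3 0 -
        A 0 3 * A 1 2 * A 2 0 * A 3 1 + A 0 3 * A 1 2 * A 2 1 * A 3 0 := by
  have e1 : (Fin.succ 2 : Fin 4) = 3 := rfl
  have e2 : (Fin.castSucc 2 : Fin 4) = 2 := rfl
  have e3 : ((1 : Fin 4) < Fin.succ 2) = True := by decide
  simp [Matrix.det_succ_row_zero, Fin.sum_univ_succ, Fin.succAbove, e1, e2, e3]
  ring

set_option maxHeartbeats 1600000 in
theorem charpoly_partial_transpose (ρ : Matrix (Fin 2 × Fin 2) (Fin 2 × Fin 2) ℂ)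
    (hρ : ptrace2 ρ = (1 / 2 : ℂ) • (1 : Matrix (Fin 2) (Fin 2) ℂ)) :
    ∀ lam : ℂ,
      (ptranspose1 ρ - (1 / 2 - lam) • (1 : Matrix (Fin 2 × Fin 2) (Fin 2 × Fin 2) ℂ)).det
        = (ρ - lam • (1 : Matrix (Fin 2 × Fin 2) (Fin 2 × Fin 2) ℂ)).det := by
  have hc : ∀ i j : Fin 2, ρ (i, 0) (j, 0) + ρ (i, 1) (j, 1)
      = (1 / 2 : ℂ) • (1 : Matrix (Fin 2) (Fin 2) ℂ) i j := by
    intro i j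
    have := congrFun (congrFun hρ i) j
    simpa [ptrace2, Fin.sum_univ_two] using this
  have h00 : ρ (0, 1) (0, 1) = 1 / 2 - ρ (0, 0) (0, 0) := by
    have := hc 0 0; simp [Matrix.one_apply] at this; linear_combination this
  have h01 : ρ (0, 1) (1, 1) = - ρ (0, 0) (1, 0) := by
    have := hc 0 1; simp [Matrix.one_apply] at this; linear_combination this
  have h10 : ρ (1, 1) (0, 1) = - ρ (1, 0) (0, 0) := by
    have := hc 1 0; simp [Matrix.one_apply] at this; linear_combination this
  have h11 : ρ (1, 1) (1, 1) = 1 / 2 - ρ (1, 0) (1, 0) := by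
    have := hc 1 1; simp [Matrix.one_apply] at this; linear_combination this
  intro lam
  rw [← Matrix.det_submatrix_equiv_self qubitEquiv
    (ptranspose1 ρ - (1 / 2 - lam) • (1 : Matrix (Fin 2 × Fin 2) (Fin 2 × Fin 2) ℂ)),
    ← Matrix.det_submatrix_equiv_self qubitEquiv
    (ρ - lam • (1 : Matrix (Fin 2 × Fin 2) (Fin 2 × Fin 2) ℂ))]
  rw [my_det_fin_four, my_det_fin_four]
  simp only [Matrix.submatrix_apply, qubitEquiv, Equiv.coe_fn_mk, Matrix.cons_val_zero,
    Matrix.cons_val_one, Matrix.head_cons, Matrix.cons_val_two, Matrix.tail_cons,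
    Matrix.cons_val_three, ptranspose1, Matrix.sub_apply, Matrix.smul_apply, Matrix.one_apply,
    smul_eq_mul]
  norm_num [Prod.ext_iff]
  rw [h00, h01, h10, h11]
  ring
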